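/- Weissman's L1 concentration: let P be a probability distribution on a finite set of size Z and P̂ the empirical distribution from n i.i.d. samples drawn from P. Then for any δ > 0, P(‖P − P̂‖₁ ≥ √(2Z·log(2/δ)/n)) ≤ δ, where ‖·‖₁ is the L1 distance between distributions. -/

import Mathlib

open MeasureTheory

open Real in
lemma hoeffding_core (p t : ℝ) (hp0 : 0 ≤ p) (hp1 : p ≤ 1) (ht : 0 ≤ t) :
    (1 - p) * exp (-(p * t)) + p * exp ((1 - p) * t) ≤ exp (t ^ 2 / 8) := by
  set f : ℝ → ℝ := fun u => (1 - p) * exp (-(p * u)) + p * exp ((1 - p) * u) with hfdef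
  have hfpos : ∀ u, 0 < f u := by
    intro u
    rcases eq_or_lt_of_le hp0 with h | h
    · simp [hfdef, ← h]
    · have h1 : 0 < p * exp ((1 - p) * u) := mul_pos h (exp_pos _)
      have h2 : 0 ≤ (1 - p) * exp (-(p * u)) :=
        mul_nonneg (by linarith) (exp_pos _).le
      simp only [hfdef]; linarith
  set F' : ℝ → ℝ := fun u => p * (1 - p) * (exp ((1 - p) * u) - exp (-(p * u))) with hF'def
  set F'' : ℝ → ℝ := fun u => p * (1 - p) *
      ((1 - p) * exp ((1 - p) * u) + p * exp (-(p * u))) with hF''def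
  have hf : ∀ u, HasDerivAt f (F' u) u := by
    intro u
    have h1 : HasDerivAt (fun u : ℝ => -(p * u)) (-p) u := by
      have hd := ((hasDerivAt_id u).const_mul p).neg
      simp only [mul_one] at hd
      exact hd
    have h2 : HasDerivAt (fun u : ℝ => (1 - p) * u) (1 - p) u := by
      simpa using (hasDerivAt_id u).const_mul (1 - p)
    have := ((h1.exp).const_mul (1 - p)).add ((h2.exp).const_mul p)
    refine this.congr_deriv ?_
    simp only [hF'def]; ring
  have hF' : ∀ u, HasDerivAt F' (F'' u) u := by
    intro u
    have h1 : HasDerivAt (fun u : ℝ => -(p * u)) (-p) u := by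
      have hd := ((hasDerivAt_id u).const_mul p).neg
      simp only [mul_one] at hd
      exact hd
    have h2 : HasDerivAt (fun u : ℝ => (1 - p) * u) (1 - p) u := by
      simpa using (hasDerivAt_id u).const_mul (1 - p)
    have := ((h2.exp).sub (h1.exp)).const_mul (p * (1 - p))
    refine this.congr_deriv ?_
    simp only [hF''def]; ring
  set h : ℝ → ℝ := fun u => u / 4 - F' u / f u with hhdef
  have hh : ∀ u, HasDerivAt h (1 / 4 - (F'' u * f u - F' u * F' u) / (f u) ^ 2) u := by
    intro u
    have h1 : HasDerivAt (fun u : ℝ => u / 4) (1 / 4) u := by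
      simpa using (hasDerivAt_id u).div_const 4
    exact h1.sub (((hF' u).div (hf u) (hfpos u).ne'))
  have hkey : ∀ u, 0 ≤ 1 / 4 - (F'' u * f u - F' u * F' u) / (f u) ^ 2 := by
    intro u
    rw [sub_nonneg, div_le_iff₀ (pow_pos (hfpos u) 2)]
    have hnum : F'' u * f u - F' u * F' u
        = p * (1 - p) * (exp ((1 - p) * u) * exp (-(p * u))) := by
      simp only [hF'def, hF''def, hfdef]; ring
    rw [hnum]
    nlinarith [sq_nonneg ((1 - p) * exp (-(p * u)) - p * exp ((1 - p) * u)),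
      (exp_pos ((1 - p) * u)).le, (exp_pos (-(p * u))).le,
      mul_nonneg hp0 (by linarith : (0:ℝ) ≤ 1 - p)]
  have hmono : Monotone h := monotone_of_hasDerivAt_nonneg hh (fun u => hkey u)
  have h0 : h 0 = 0 := by simp [hhdef, hF'def]
  have hhn : ∀ u, 0 ≤ u → 0 ≤ h u := fun u hu => h0 ▸ hmono hu
  set g : ℝ → ℝ := fun u => u ^ 2 / 8 - log (f u) with hgdef
  have hg : ∀ u, HasDerivAt g (h u) u := by
    intro u
    have h1 : HasDerivAt (fun u : ℝ => u ^ 2 / 8) (u / 4) u := by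
      have := (hasDerivAt_pow 2 u).div_const 8
      refine this.congr_deriv ?_; rw [show (2:ℕ) - 1 = 1 from rfl]; push_cast; ring
    have h2 : HasDerivAt (fun u => log (f u)) (F' u / f u) u := (hf u).log (hfpos u).ne'
    exact h1.sub h2
  have hgmono : MonotoneOn g (Set.Ici 0) := by
    apply monotoneOn_of_hasDerivWithinAt_nonneg (convex_Ici 0)
      (fun u _ => (hg u).continuousAt.continuousWithinAt)
      (fun u _ => (hg u).hasDerivWithinAt)
    intro u hu
    rw [interior_Ici] at hu
    exact hhn u (le_of_lt hu)
  have hg0 : g 0 = 0 := by simp [hgdef, hfdef]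
  have : 0 ≤ g t := hg0 ▸ hgmono (Set.self_mem_Ici) (Set.mem_Ici.mpr ht) ht
  have hlog : log (f t) ≤ t ^ 2 / 8 := by simp only [hgdef] at this; linarith
  calc f t ≤ exp (log (f t)) := by rw [exp_log (hfpos t)]
    _ ≤ exp (t ^ 2 / 8) := exp_le_exp.mpr hlog

open Real in
lemma bern_mgf_le (p s : ℝ) (hp0 : 0 ≤ p) (hp1 : p ≤ 1) (hs : 0 ≤ s) :
    (1 - p) + p * exp s ≤ exp (p * s + s ^ 2 / 8) := by
  have h := hoeffding_core p s hp0 hp1 hs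
  have e1 : exp (p * s) * exp (-(p * s)) = 1 := by rw [← exp_add]; simp
  have e2 : exp (p * s) * exp ((1 - p) * s) = exp s := by rw [← exp_add]; ring_nf
  have key : exp (p * s) * ((1 - p) * exp (-(p * s)) + p * exp ((1 - p) * s))
      = (1 - p) + p * exp s := by linear_combination (1 - p) * e1 + p * e2
  calc (1 - p) + p * exp s
      = exp (p * s) * ((1 - p) * exp (-(p * s)) + p * exp ((1 - p) * s)) := key.symm
    _ ≤ exp (p * s) * exp (s ^ 2 / 8) := by
        exact mul_le_mul_of_nonneg_left h (exp_pos _).le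
    _ = exp (p * s + s ^ 2 / 8) := (exp_add _ _).symm

/-- Weissman's L1 concentration for the empirical distribution of `n` i.i.d.
samples from a distribution `P` on a finite alphabet of size `Z`. -/
theorem weissman_l1 {Ω : Type*} [MeasurableSpace Ω]
    (μ : Measure Ω) [IsProbabilityMeasure μ]
    (Z n : ℕ) (hn : 0 < n)
    (P : Measure (Fin Z)) [IsProbabilityMeasure P]
    (X : Fin n → Ω → Fin Z) (hmeas : ∀ t, Measurable (X t))
    (hindep : ProbabilityTheory.iIndepFun X μ)
    (hlaw : ∀ t, Measure.map (X t) μ = P)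
    (δ : ℝ) (hδ : 0 < δ) :
    μ {ω | Real.sqrt (2 * Z * Real.log (2 / δ) / n) ≤
        ∑ z : Fin Z,
          |(P {z}).toReal - ((Finset.univ.filter fun t => X t ω = z).card : ℝ) / n|}
      ≤ ENNReal.ofReal δ := by
  classical
  by_cases hδ1 : 1 ≤ δ
  · refine le_trans prob_le_one ?_
    rw [← ENNReal.ofReal_one]
    exact ENNReal.ofReal_le_ofReal hδ1
  push_neg at hδ1
  -- Z ≥ 1
  have hZ : 0 < Z := by
    rcases Nat.eq_zero_or_pos Z with h | h
    · exfalso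
      subst h
      have h1 : P Set.univ = 1 := measure_univ
      simp [Set.univ_eq_empty_iff.mpr inferInstance] at h1
    · exact h
  have hnR : (0:ℝ) < n := by exact_mod_cast hn
  have hlogpos : 0 < Real.log (2 / δ) := Real.log_pos (by rw [lt_div_iff₀ hδ]; linarith)
  set ε := Real.sqrt (2 * Z * Real.log (2 / δ) / n) with hεdef
  have hε0 : 0 ≤ ε := Real.sqrt_nonneg _
  have hZR : (0:ℝ) < Z := by exact_mod_cast hZ
  have hε2 : ε ^ 2 = 2 * Z * Real.log (2 / δ) / n := by
    rw [hεdef, Real.sq_sqrt]; positivity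
  -- total mass of P
  have htotP : ∑ z : Fin Z, (P {z}).toReal = 1 := by
    have h1 : ∑ z : Fin Z, P {z} = P Set.univ := by
      rw [← measure_biUnion_finset (f := fun z : Fin Z => ({z} : Set (Fin Z)))
        (by intro x _ y _ hxy; simp [Function.onFun, hxy])
        (fun z _ => measurableSet_singleton z)]
      congr 1
      simp only [Finset.mem_univ, Set.iUnion_true]
      exact Set.iUnion_of_singleton (Fin Z)
    rw [← ENNReal.toReal_sum (fun z _ => measure_ne_top P _), h1, measure_univ,
      ENNReal.toReal_one]
  -- total mass of the empirical measure
  have htotC : ∀ ω, ∑ z : Fin Z,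
      ((Finset.univ.filter fun t => X t ω = z).card : ℝ) = n := by
    intro ω
    have := Finset.card_eq_sum_card_fiberwise
      (s := (Finset.univ : Finset (Fin n))) (t := Finset.univ) (f := fun t => X t ω)
      (fun x _ => Finset.mem_univ _)
    rw [Finset.card_univ, Fintype.card_fin] at this
    exact_mod_cast congrArg (Nat.cast : ℕ → ℝ) this.symm
  -- the family of bad events indexed by subsets
  set Y : Finset (Fin Z) → Fin n → Ω → ℝ :=
    fun A t ω => if X t ω ∈ A then 1 else 0 with hYdef
  set E : Finset (Fin Z) → Set Ω := fun A =>
    {ω | (n : ℝ) * (∑ z ∈ A, (P {z}).toReal) + n * ε / 2 ≤ (∑ t, Y A t) ω} with hEdef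
  -- inclusion into the union
  have hsub : {ω | ε ≤ ∑ z : Fin Z,
        |(P {z}).toReal - ((Finset.univ.filter fun t => X t ω = z).card : ℝ) / n|}
      ⊆ ⋃ A : Finset (Fin Z), E A := by
    intro ω hω
    simp only [Set.mem_setOf_eq] at hω
    set c : Fin Z → ℝ := fun z =>
      ((Finset.univ.filter fun t => X t ω = z).card : ℝ) / n with hcdef
    set A : Finset (Fin Z) := Finset.univ.filter fun z => (P {z}).toReal < c z with hAdef
    have hsplit : ∑ z : Fin Z, |(P {z}).toReal - c z|
        = (∑ z ∈ A, (c z - (P {z}).toReal)) + ∑ z ∈ Finset.univ.filter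
            (fun z => ¬ ((P {z}).toReal < c z)), ((P {z}).toReal - c z) := by
      rw [← Finset.sum_filter_add_sum_filter_not Finset.univ
        (fun z => (P {z}).toReal < c z)]
      congr 1
      · apply Finset.sum_congr rfl
        intro z hz
        rw [Finset.mem_filter] at hz
        rw [abs_of_neg (by linarith [hz.2])]
        ring
      · apply Finset.sum_congr rfl
        intro z hz
        rw [Finset.mem_filter] at hz
        rw [abs_of_nonneg (by push_neg at hz; linarith [hz.2])]
    have htotc : ∑ z : Fin Z, c z = 1 := by
      simp only [hcdef]
      rw [← Finset.sum_div, htotC ω, div_self hnR.ne']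
    -- the complement sum equals the A-sum
    have hcompl : ∑ z ∈ Finset.univ.filter (fun z => ¬ ((P {z}).toReal < c z)),
        ((P {z}).toReal - c z) = (∑ z ∈ A, (c z - (P {z}).toReal)) := by
      have h1 := Finset.sum_filter_add_sum_filter_not Finset.univ
        (fun z => (P {z}).toReal < c z) (fun z => (P {z}).toReal - c z)
      have h2 : ∑ z : Fin Z, ((P {z}).toReal - c z) = 0 := by
        rw [Finset.sum_sub_distrib, htotP, htotc]; ring
      rw [h2] at h1
      have : ∑ z ∈ A, ((P {z}).toReal - c z)
          = - ∑ z ∈ A, (c z - (P {z}).toReal) := by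
        rw [← Finset.sum_neg_distrib]
        apply Finset.sum_congr rfl; intro z _; ring
      rw [← hAdef] at h1
      linarith [h1, this]
    have hA2 : ε ≤ 2 * ∑ z ∈ A, (c z - (P {z}).toReal) := by
      rw [hsplit, hcompl] at hω
      linarith
    refine Set.mem_iUnion.mpr ⟨A, ?_⟩
    simp only [hEdef, Set.mem_setOf_eq]
    have hsumY : (∑ t, Y A t) ω = ((Finset.univ.filter fun t => X t ω ∈ A).card : ℝ) := by
      rw [Finset.sum_apply]
      simp [hYdef]
    have hfiber : ((Finset.univ.filter fun t => X t ω ∈ A).card : ℝ)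
        = ∑ z ∈ A, (n : ℝ) * c z := by
      have h1 := Finset.card_eq_sum_card_fiberwise
        (s := Finset.univ.filter fun t => X t ω ∈ A) (t := A) (f := fun t => X t ω)
        (fun x hx => (Finset.mem_filter.mp hx).2)
      have h2 : ∀ z ∈ A, ((Finset.univ.filter fun t => X t ω ∈ A).filter
          (fun t => X t ω = z)) = Finset.univ.filter fun t => X t ω = z := by
        intro z hz
        rw [Finset.filter_filter]
        apply Finset.filter_congr
        intro t _
        constructor
        · rintro ⟨-, h⟩; exact h
        · rintro h; exact ⟨h ▸ hz, h⟩
      rw [Finset.sum_congr rfl (fun z hz => congrArg Finset.card (h2 z hz))] at h1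
      rw [h1]
      push_cast
      apply Finset.sum_congr rfl
      intro z _
      rw [hcdef]
      field_simp
    rw [hsumY, hfiber, ← Finset.mul_sum]
    rw [Finset.sum_sub_distrib] at hA2
    nlinarith [mul_le_mul_of_nonneg_left hA2 hnR.le]
  refine le_trans (measure_mono hsub) ?_
  refine le_trans (measure_iUnion_fintype_le μ E) ?_
  -- per-subset Chernoff bound
  have hEA : ∀ A : Finset (Fin Z), μ (E A) ≤ ENNReal.ofReal ((δ / 2) ^ Z) := by
    intro A
    set p : ℝ := ∑ z ∈ A, (P {z}).toReal with hpdef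
    have hp0 : 0 ≤ p := Finset.sum_nonneg fun z _ => ENNReal.toReal_nonneg
    have hp1 : p ≤ 1 := by
      rw [hpdef, ← htotP]
      exact Finset.sum_le_sum_of_subset_of_nonneg (Finset.subset_univ A)
        (fun z _ _ => ENNReal.toReal_nonneg)
    set s : ℝ := 2 * ε with hsdef
    have hs0 : 0 ≤ s := by positivity
    have hg : Measurable (fun z : Fin Z => if z ∈ A then (1:ℝ) else 0) :=
      Measurable.of_discrete
    have hYmeas : ∀ t, Measurable (Y A t) := by
      intro t
      exact hg.comp (hmeas t)
    have hYindep : ProbabilityTheory.iIndepFun (Y A) μ := by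
      have := hindep.comp (fun _ => fun z : Fin Z => if z ∈ A then (1:ℝ) else 0)
        (fun _ => hg)
      exact this
    -- mgf of a single indicator
    have hmgf1 : ∀ t, ProbabilityTheory.mgf (Y A t) μ s = (1 - p) + p * Real.exp s := by
      intro t
      have h1 : ProbabilityTheory.mgf (Y A t) μ s
          = ∫ z, Real.exp (s * (if z ∈ A then (1:ℝ) else 0)) ∂P := by
        rw [ProbabilityTheory.mgf, ← hlaw t,
          integral_map (hmeas t).aemeasurable
            (by exact ((measurable_const.mul hg).exp).aestronglyMeasurable)]
      rw [h1, integral_fintype (Integrable.of_finite)]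
      simp only [measureReal_def]
      have h2 : ∀ z : Fin Z, (P {z}).toReal • Real.exp (s * (if z ∈ A then (1:ℝ) else 0))
          = (P {z}).toReal + (if z ∈ A then (P {z}).toReal * (Real.exp s - 1) else 0) := by
        intro z
        by_cases hz : z ∈ A <;> simp [hz] <;> ring
      rw [Finset.sum_congr rfl (fun z _ => h2 z), Finset.sum_add_distrib, htotP,
        Finset.sum_ite_mem, Finset.univ_inter, ← Finset.sum_mul, ← hpdef]
      ring
    -- the sum variable
    set S : Ω → ℝ := ∑ t, Y A t with hSdef
    have hSmeas : Measurable S := by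
      have : S = fun ω => ∑ t, Y A t ω := by
        ext ω; rw [hSdef, Finset.sum_apply]
      rw [this]
      exact Finset.measurable_sum _ (fun t _ => hYmeas t)
    have hSbd : ∀ ω, S ω ≤ n := by
      intro ω
      rw [hSdef, Finset.sum_apply]
      calc ∑ t, Y A t ω ≤ ∑ _t : Fin n, (1:ℝ) := by
            apply Finset.sum_le_sum
            intro t _
            simp only [hYdef]
            split <;> norm_num
        _ = n := by simp
    have hint : Integrable (fun ω => Real.exp (s * S ω)) μ := by
      refine (integrable_const (Real.exp (s * n))).mono'
        ((hSmeas.const_mul s).exp).aestronglyMeasurable (Filter.Eventually.of_forall ?_)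
      intro ω
      rw [Real.norm_eq_abs, abs_of_pos (Real.exp_pos _)]
      exact Real.exp_le_exp.mpr (mul_le_mul_of_nonneg_left (hSbd ω) hs0)
    have hcher := ProbabilityTheory.measure_ge_le_exp_mul_mgf (μ := μ) (X := S)
      ((n : ℝ) * p + n * ε / 2) hs0 hint
    have hmgfS : ProbabilityTheory.mgf S μ s ≤ Real.exp (n * (p * s + s ^ 2 / 8)) := by
      rw [hSdef, hYindep.mgf_sum hYmeas Finset.univ]
      calc ∏ t, ProbabilityTheory.mgf (Y A t) μ s
          ≤ ∏ _t : Fin n, Real.exp (p * s + s ^ 2 / 8) := by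
            apply Finset.prod_le_prod (fun t _ => ProbabilityTheory.mgf_nonneg)
            intro t _
            rw [hmgf1 t]
            exact bern_mgf_le p s hp0 hp1 hs0
        _ = Real.exp (n * (p * s + s ^ 2 / 8)) := by
            rw [Finset.prod_const, Finset.card_univ, Fintype.card_fin, ← Real.exp_nat_mul]
    have hL : Real.log (δ / 2) = - Real.log (2 / δ) := by
      rw [Real.log_div hδ.ne' (by norm_num), Real.log_div (by norm_num) hδ.ne']
      ring
    have htail : (μ (E A)).toReal ≤ (δ / 2) ^ Z := by
      have h4 : (μ (E A)).toReal ≤ Real.exp (-((n:ℝ) * ε ^ 2 / 2)) := by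
        calc (μ (E A)).toReal
            ≤ Real.exp (-s * ((n:ℝ) * p + n * ε / 2)) * ProbabilityTheory.mgf S μ s :=
              hcher
          _ ≤ Real.exp (-s * ((n:ℝ) * p + n * ε / 2)) *
                Real.exp (n * (p * s + s ^ 2 / 8)) :=
              mul_le_mul_of_nonneg_left hmgfS (Real.exp_pos _).le
          _ = Real.exp (-((n:ℝ) * ε ^ 2 / 2)) := by
              rw [← Real.exp_add]
              congr 1
              rw [hsdef]
              ring
      have h5 : Real.exp (-((n:ℝ) * ε ^ 2 / 2)) = (δ / 2) ^ Z := by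
        have harg : -((n:ℝ) * ε ^ 2 / 2) = (Z : ℝ) * Real.log (δ / 2) := by
          rw [hε2, hL]
          field_simp
        rw [harg, Real.exp_nat_mul, Real.exp_log (by positivity)]
      rw [← h5]
      exact h4
    have := ENNReal.ofReal_le_ofReal htail
    rwa [ENNReal.ofReal_toReal (measure_ne_top μ _)] at this
  refine le_trans (Finset.sum_le_sum fun A _ => hEA A) ?_
  rw [Finset.sum_const, Finset.card_univ, Fintype.card_finset, Fintype.card_fin,
    nsmul_eq_mul]
  have h6 : ((2 ^ Z : ℕ) : ENNReal) * ENNReal.ofReal ((δ / 2) ^ Z)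
      = ENNReal.ofReal (δ ^ Z) := by
    rw [← ENNReal.ofReal_natCast, ← ENNReal.ofReal_mul (by positivity)]
    congr 1
    push_cast
    rw [← mul_pow, show (2:ℝ) * (δ / 2) = δ by ring]
  rw [h6]
  exact ENNReal.ofReal_le_ofReal (pow_le_of_le_one hδ.le hδ1.le hZ.ne')
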